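/- If a connected finite simple graph G admits a weak IASI, then G is bipartite or G has at least one mono-indexed edge; equivalently, for every weak IASI f of a connected graph G, if no edge of G is mono-indexed under f, then G is bipartite. -/

import Mathlib

open Pointwise

/-- The induced set-label on unordered pairs: the sumset of the two vertex labels. -/
def edgeLabel {V : Type*} (f : V → Finset ℕ) : Sym2 V → Finset ℕ :=
  Sym2.lift ⟨fun u v => f u + f v, fun u v => add_comm (f u) (f v)⟩

/-- `f` is a weak integer additive set-indexer of `G`. -/
structure IsWeakIASI {V : Type*} (G : SimpleGraph V) (f : V → Finset ℕ) : Prop where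
  nonempty : ∀ v, (f v).Nonempty
  injective : Function.Injective f
  edgeInjective : Set.InjOn (edgeLabel f) G.edgeSet
  weak : ∀ u v, G.Adj u v → (edgeLabel f s(u, v)).card = max (f u).card (f v).card

/-- The number of mono-indexed edges of `G` under the labeling `f`. -/
noncomputable def monoEdgeCount {V : Type*} (G : SimpleGraph V) (f : V → Finset ℕ) : ℕ :=
  {e ∈ G.edgeSet | (edgeLabel f e).card = 1}.ncard

/-- The sparing number: the minimum number of mono-indexed edges over all weak IASIs. -/
noncomputable def sparingNumber {V : Type*} (G : SimpleGraph V) : ℕ :=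
  sInf {n | ∃ f, IsWeakIASI G f ∧ monoEdgeCount G f = n}

/-- If a connected graph admits a weak IASI, then it is bipartite or has at least one
mono-indexed edge: under any weak IASI with no mono-indexed edge, `G` is 2-colorable. -/
theorem connected_weakIASI_bipartite_or_monoEdge {V : Type*} [Fintype V]
    (G : SimpleGraph V) (hconn : G.Connected) (f : V → Finset ℕ) (hf : IsWeakIASI G f) :
    G.Colorable 2 ∨ ∃ e ∈ G.edgeSet, (edgeLabel f e).card = 1 := by
  by_cases hmono : ∃ e ∈ G.edgeSet, (edgeLabel f e).card = 1
  · exact Or.inr hmono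
  left
  push_neg at hmono
  -- color by whether the label is a singleton
  refine ⟨⟨fun v => if (f v).card = 1 then 0 else 1, ?_⟩⟩
  intro u v huv hc
  have hCD : (f u).card + (f v).card - 1 ≤ (edgeLabel f s(u, v)).card :=
    cauchy_davenport_add_of_linearOrder_isCancelAdd (hf.nonempty u) (hf.nonempty v)
  have hw := hf.weak u v huv
  have hu1 : 1 ≤ (f u).card := (hf.nonempty u).card_pos
  have hv1 : 1 ≤ (f v).card := (hf.nonempty v).card_pos
  have hne : (edgeLabel f s(u, v)).card ≠ 1 :=
    hmono s(u, v) (G.mem_edgeSet.2 huv)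
  -- not both singletons (else card = 1), not both ≥ 2 (else CD contradicts weak)
  by_cases h : (f u).card = 1
  · by_cases h' : (f v).card = 1
    · rw [hw, h, h'] at hne; simp at hne
    · simp [h, h'] at hc
  · by_cases h' : (f v).card = 1
    · simp [h, h'] at hc
    · have h2 : 2 ≤ (f u).card := by omega
      have h2' : 2 ≤ (f v).card := by omega
      rw [hw] at hCD
      omega
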